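/- Let G be a connected undirected weighted graph on N vertices (N ≥ 2) with maximum edge weight w_max, Laplacian L, and pseudoinverse L†. Then for every vertex u, L†_{uu} = e_uᵀ L† e_u ≥ (N−1)²/(N³·w_max). -/

import Mathlib

open Matrix BigOperators

/-- The Laplacian matrix `L = S - A` of a weighted graph given by its weight
function `w`, where `S` is the diagonal matrix of vertex strengths. -/
noncomputable def lapW {V : Type*} [Fintype V] [DecidableEq V] (w : V → V → ℝ) :
    Matrix V V ℝ :=
  Matrix.diagonal (fun i => ∑ k, w i k) - Matrix.of w

/-- The all-ones matrix `J`. -/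
def JMat (V : Type*) : Matrix V V ℝ := Matrix.of fun _ _ => (1 : ℝ)

/-- The pseudoinverse `L† = (L + (1/N)·J)⁻¹ - (1/N)·J` of the Laplacian. -/
noncomputable def lapDagW {V : Type*} [Fintype V] [DecidableEq V] (w : V → V → ℝ) :
    Matrix V V ℝ :=
  (lapW w + ((Fintype.card V : ℝ))⁻¹ • JMat V)⁻¹ - ((Fintype.card V : ℝ))⁻¹ • JMat V

/-- The resistance distance `r_{ij} = L†_{ii} + L†_{jj} - 2 L†_{ij}`. -/
noncomputable def resDistW {V : Type*} [Fintype V] [DecidableEq V] (w : V → V → ℝ)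
    (i j : V) : ℝ :=
  lapDagW w i i + lapDagW w j j - 2 * lapDagW w i j

/-- Connectivity of the weighted graph: any two vertices are joined by a chain of
positive-weight edges. -/
def ConnW {V : Type*} (w : V → V → ℝ) : Prop :=
  ∀ i j : V, Relation.ReflTransGen (fun a b => 0 < w a b) i j

section Aux

variable {V : Type*} [Fintype V] [DecidableEq V]

lemma lapW_mulVec (w : V → V → ℝ) (x : V → ℝ) (i : V) :
    (lapW w *ᵥ x) i = ∑ j, w i j * (x i - x j) := by
  simp only [lapW, sub_mulVec, Pi.sub_apply, mulVec_diagonal]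
  simp only [mulVec, dotProduct, of_apply]
  simp [mul_sub, Finset.sum_sub_distrib, Finset.sum_mul]

lemma lap_quad (w : V → V → ℝ) (hsymm : ∀ i j, w i j = w j i) (x : V → ℝ) :
    2 * (x ⬝ᵥ (lapW w *ᵥ x)) = ∑ i, ∑ j, w i j * (x i - x j) ^ 2 := by
  have h1 : x ⬝ᵥ (lapW w *ᵥ x) = ∑ i, ∑ j, x i * (w i j * (x i - x j)) := by
    simp only [dotProduct, lapW_mulVec, Finset.mul_sum]
  have h2 : x ⬝ᵥ (lapW w *ᵥ x) = ∑ i, ∑ j, (- x j) * (w i j * (x i - x j)) := by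
    rw [h1, Finset.sum_comm]
    refine Finset.sum_congr rfl fun i _ => Finset.sum_congr rfl fun j _ => ?_
    rw [hsymm]; ring
  calc 2 * (x ⬝ᵥ (lapW w *ᵥ x))
      = (∑ i, ∑ j, x i * (w i j * (x i - x j)))
        + ∑ i, ∑ j, (- x j) * (w i j * (x i - x j)) := by
        rw [← h1, ← h2]; ring
    _ = ∑ i, ∑ j, w i j * (x i - x j) ^ 2 := by
        rw [← Finset.sum_add_distrib]
        refine Finset.sum_congr rfl fun i _ => ?_
        rw [← Finset.sum_add_distrib]
        refine Finset.sum_congr rfl fun j _ => ?_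
        ring

lemma conn_const {w : V → V → ℝ} {x : V → ℝ}
    (hall : ∀ i j, 0 < w i j → x i = x j) {a b : V}
    (h : Relation.ReflTransGen (fun a b => 0 < w a b) a b) : x a = x b := by
  induction h with
  | refl => rfl
  | tail _ hbc ih => exact ih.trans (hall _ _ hbc)

lemma lapW_transpose (w : V → V → ℝ) (hsymm : ∀ i j, w i j = w j i) :
    (lapW w)ᵀ = lapW w := by
  ext i j
  simp only [lapW, transpose_apply, Matrix.sub_apply, of_apply, diagonal_apply]
  rcases eq_or_ne i j with rfl | h
  · simp
  · simp [h, h.symm, hsymm j i]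

lemma M_posdef (hN : 2 ≤ Fintype.card V)
    (w : V → V → ℝ) (hsymm : ∀ i j, w i j = w j i) (hnonneg : ∀ i j, 0 ≤ w i j)
    (hconn : ConnW w) :
    (lapW w + ((Fintype.card V : ℝ))⁻¹ • JMat V).PosDef := by
  have hn0 : (0 : ℝ) < (Fintype.card V : ℝ) := by
    exact_mod_cast lt_of_lt_of_le (by norm_num) hN
  refine posDef_iff_dotProduct_mulVec.mpr ⟨?_, ?_⟩
  · -- Hermitian
    rw [Matrix.IsHermitian, conjTranspose_eq_transpose_of_trivial, transpose_add,
      transpose_smul, lapW_transpose w hsymm]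
    congr 1
  · intro x hx
    have hx' : (star x : V → ℝ) = x := by
      funext i; exact star_trivial _
    rw [hx']
    have hJ : x ⬝ᵥ ((((Fintype.card V : ℝ))⁻¹ • JMat V) *ᵥ x)
        = (Fintype.card V : ℝ)⁻¹ * (∑ i, x i) ^ 2 := by
      rw [smul_mulVec, dotProduct_smul]
      have : x ⬝ᵥ (JMat V *ᵥ x) = (∑ i, x i) ^ 2 := by
        simp only [JMat, mulVec, dotProduct, of_apply, one_mul]
        rw [← Finset.sum_mul, sq]
      rw [this, smul_eq_mul]
    have hsplit : x ⬝ᵥ ((lapW w + ((Fintype.card V : ℝ))⁻¹ • JMat V) *ᵥ x)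
        = x ⬝ᵥ (lapW w *ᵥ x) + (Fintype.card V : ℝ)⁻¹ * (∑ i, x i) ^ 2 := by
      rw [add_mulVec, dotProduct_add, hJ]
    rw [hsplit]
    have hterm : ∀ i j, 0 ≤ w i j * (x i - x j) ^ 2 := fun i j =>
      mul_nonneg (hnonneg i j) (sq_nonneg _)
    have hLnn : 0 ≤ x ⬝ᵥ (lapW w *ᵥ x) := by
      have h2 := lap_quad w hsymm x
      have : (0:ℝ) ≤ ∑ i, ∑ j, w i j * (x i - x j) ^ 2 :=
        Finset.sum_nonneg fun i _ => Finset.sum_nonneg fun j _ => hterm i j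
      linarith
    rcases eq_or_ne (∑ i, x i) 0 with hsum | hsum
    · -- need strict positivity of Laplacian part
      have hxa : ∃ a, x a ≠ 0 := by
        by_contra h
        push_neg at h
        exact hx (funext fun i => h i)
      obtain ⟨a, ha⟩ := hxa
      have hedge : ∃ i j, 0 < w i j ∧ x i ≠ x j := by
        by_contra h
        push_neg at h
        have hallc : ∀ i j, 0 < w i j → x i = x j := fun i j hw => h i j hw
        have hconst : ∀ b, x a = x b := fun b => conn_const hallc (hconn a b)
        have : ∑ i, x i = (Fintype.card V : ℝ) * x a := by
          rw [Finset.sum_congr rfl fun b _ => (hconst b).symm]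
          simp [Finset.sum_const, mul_comm]
        rw [this] at hsum
        rcases mul_eq_zero.mp hsum with h' | h'
        · exact hn0.ne' h'
        · exact ha h'
      obtain ⟨i0, j0, hw0, hne0⟩ := hedge
      have hpos : 0 < ∑ i, ∑ j, w i j * (x i - x j) ^ 2 := by
        refine Finset.sum_pos' (fun i _ => Finset.sum_nonneg fun j _ => hterm i j)
          ⟨i0, Finset.mem_univ _, ?_⟩
        refine Finset.sum_pos' (fun j _ => hterm i0 j) ⟨j0, Finset.mem_univ _, ?_⟩
        exact mul_pos hw0 (pow_two_pos_of_ne_zero (sub_ne_zero.mpr hne0))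
      have h2 := lap_quad w hsymm x
      rw [hsum]
      norm_num
      linarith
    · have : 0 < (Fintype.card V : ℝ)⁻¹ * (∑ i, x i) ^ 2 :=
        mul_pos (inv_pos.mpr hn0) (pow_two_pos_of_ne_zero hsum)
      linarith

lemma dot_sub_smul_left (a b v : V → ℝ) (c : ℝ) :
    (a - c • b) ⬝ᵥ v = a ⬝ᵥ v - c * (b ⬝ᵥ v) := by
  rw [sub_dotProduct, smul_dotProduct, smul_eq_mul]

lemma dot_sub_smul_right (v a b : V → ℝ) (c : ℝ) :
    v ⬝ᵥ (a - c • b) = v ⬝ᵥ a - c * (v ⬝ᵥ b) := by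
  rw [dotProduct_sub, dotProduct_smul, smul_eq_mul]

lemma self_adjoint_expand {M : Matrix V V ℝ}
    (hMt : Mᵀ = M) (hmul : M * M⁻¹ = 1) (hmul' : M⁻¹ * M = 1)
    (y : V → ℝ) (t : ℝ) :
    (y - t • (M *ᵥ y)) ⬝ᵥ (M⁻¹ *ᵥ (y - t • (M *ᵥ y)))
      = y ⬝ᵥ (M⁻¹ *ᵥ y) - 2 * t * (y ⬝ᵥ y) + t ^ 2 * (y ⬝ᵥ (M *ᵥ y)) := by
  have hback : M⁻¹ *ᵥ (M *ᵥ y) = y := by rw [mulVec_mulVec, hmul', one_mulVec]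
  have hforth : M *ᵥ (M⁻¹ *ᵥ y) = y := by rw [mulVec_mulVec, hmul, one_mulVec]
  have hgm : (M *ᵥ y) ⬝ᵥ (M⁻¹ *ᵥ y) = y ⬝ᵥ y := by
    rw [dotProduct_comm, dotProduct_mulVec, ← mulVec_transpose, hMt, hforth]
  have hgy : (M *ᵥ y) ⬝ᵥ y = y ⬝ᵥ (M *ᵥ y) := dotProduct_comm _ _
  rw [mulVec_sub, mulVec_smul, hback, dot_sub_smul_right,
    dot_sub_smul_left, dot_sub_smul_left, hgm, hgy]
  ring

end Aux

/-- For a connected weighted graph on `N ≥ 2` vertices with maximum edge weight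
`w_max`, for every vertex `u`, `L†_{uu} = e_uᵀ L† e_u ≥ (N-1)²/(N³·w_max)`. -/
theorem stmt_7 {V : Type*} [Fintype V] [DecidableEq V]
    (hN : 2 ≤ Fintype.card V) (w : V → V → ℝ)
    (hsymm : ∀ i j, w i j = w j i) (hnonneg : ∀ i j, 0 ≤ w i j)
    (hdiag : ∀ i, w i i = 0) (hconn : ConnW w)
    (wmax : ℝ) (hub : ∀ i j, w i j ≤ wmax) (hex : ∃ i j, i ≠ j ∧ w i j = wmax)
    (u : V) :
    lapDagW w u u = Pi.single u (1 : ℝ) ⬝ᵥ (lapDagW w *ᵥ Pi.single u (1 : ℝ)) ∧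
    ((Fintype.card V : ℝ) - 1) ^ 2 / ((Fintype.card V : ℝ) ^ 3 * wmax) ≤
      lapDagW w u u := by
  constructor
  · simp [dotProduct_single, mulVec_single, mul_one]
  · set n : ℝ := (Fintype.card V : ℝ) with hn
    have hn2 : (2:ℝ) ≤ n := by rw [hn]; exact_mod_cast hN
    have hn0 : (0:ℝ) < n := by linarith
    have hwpos : 0 < wmax := by
      obtain ⟨i, j, hij, hw⟩ := hex
      rcases (hconn i j).cases_head with h | ⟨c', hc, _⟩
      · exact absurd h hij
      · exact lt_of_lt_of_le hc (hub i c')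
    set c : ℝ := n⁻¹ with hc
    set M : Matrix V V ℝ := lapW w + c • JMat V with hMdef
    have hM : M.PosDef := M_posdef hN w hsymm hnonneg hconn
    have hMinv : M⁻¹.PosDef := hM.inv
    have hdet : IsUnit M.det := (Matrix.isUnit_iff_isUnit_det M).mp hM.isUnit
    have hmul : M * M⁻¹ = 1 := Matrix.mul_nonsing_inv M hdet
    have hmul' : M⁻¹ * M = 1 := Matrix.nonsing_inv_mul M hdet
    have hMt : Mᵀ = M := by
      have h := hM.isHermitian
      rwa [Matrix.IsHermitian, conjTranspose_eq_transpose_of_trivial] at h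
    have hMinvT : (M⁻¹)ᵀ = M⁻¹ := by rw [Matrix.transpose_nonsing_inv, hMt]
    set e : V → ℝ := Pi.single u 1 with he
    set one : V → ℝ := fun _ => 1 with honedef
    set y : V → ℝ := e - c • one with hy
    have hLone : lapW w *ᵥ one = 0 := by
      funext i; rw [lapW_mulVec]; simp [honedef]
    have hJv : ∀ v : V → ℝ, JMat V *ᵥ v = fun _ => ∑ j, v j := by
      intro v; funext i; simp [JMat, mulVec, dotProduct]
    have hsum_one : ∑ j : V, one j = n := by simp [honedef, hn]
    have hsum_e : ∑ j : V, e j = 1 := by simp [he]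
    have hcn : c * n = 1 := by rw [hc]; exact inv_mul_cancel₀ hn0.ne'
    have hMone : M *ᵥ one = one := by
      rw [hMdef, add_mulVec, hLone, smul_mulVec, hJv]
      funext i
      simp [hsum_one, honedef, hcn, ← hn]
    have hMinvone : M⁻¹ *ᵥ one = one := by
      conv_lhs => rw [← hMone]
      rw [mulVec_mulVec, hmul', one_mulVec]
    have hJe : JMat V *ᵥ e = one := by
      rw [hJv]; funext i; simp [hsum_e, honedef]
    have hMy : M *ᵥ y = lapW w *ᵥ e := by
      rw [hy, mulVec_sub, mulVec_smul, hMone, hMdef, add_mulVec, smul_mulVec, hJe]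
      abel
    have hdot_e_one : e ⬝ᵥ one = 1 := by simp [he, honedef, dotProduct, Pi.single_apply]
    have hdot_one_one : one ⬝ᵥ one = n := by simp [honedef, dotProduct, hn]
    have hvecMul : ∀ v : V → ℝ, one ⬝ᵥ (M⁻¹ *ᵥ v) = one ⬝ᵥ v := by
      intro v
      rw [dotProduct_mulVec]
      congr 1
      rw [← mulVec_transpose, hMinvT, hMinvone]
    have hQ' : y ⬝ᵥ (M⁻¹ *ᵥ y) = lapDagW w u u := by
      have hMinvy : M⁻¹ *ᵥ y = M⁻¹ *ᵥ e - c • one := by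
        rw [hy, mulVec_sub, mulVec_smul, hMinvone]
      have h1 : e ⬝ᵥ (M⁻¹ *ᵥ e) = M⁻¹ u u := by
        rw [he, mulVec_single, single_dotProduct]
        simp
      have h2 : one ⬝ᵥ (M⁻¹ *ᵥ e) = 1 := by
        rw [hvecMul, dotProduct_comm]; exact hdot_e_one
      have h3 : lapDagW w u u = M⁻¹ u u - c := by
        show ((lapW w + ((Fintype.card V : ℝ))⁻¹ • JMat V)⁻¹
          - ((Fintype.card V : ℝ))⁻¹ • JMat V) u u = M⁻¹ u u - c
        rw [← hn, ← hc, ← hMdef]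
        simp [JMat, Matrix.sub_apply, Matrix.smul_apply]
      have hone_e : one ⬝ᵥ e = 1 := by rw [dotProduct_comm]; exact hdot_e_one
      rw [hMinvy, dot_sub_smul_right, hy, dot_sub_smul_left, dot_sub_smul_left,
        h1, h2, hdot_e_one, hdot_one_one, hcn, h3]
      ring
    set t : ℝ := (n * wmax)⁻¹ with ht
    have hz : 0 ≤ (y - t • (M *ᵥ y)) ⬝ᵥ (M⁻¹ *ᵥ (y - t • (M *ᵥ y))) := by
      have h := hMinv.posSemidef.dotProduct_mulVec_nonneg (y - t • (M *ᵥ y))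
      simpa using h
    have hexp := self_adjoint_expand hMt hmul hmul' y t
    have hee : e ⬝ᵥ e = 1 := by simp [he, dotProduct, Pi.single_apply]
    have hone_e : one ⬝ᵥ e = 1 := by rw [dotProduct_comm]; exact hdot_e_one
    have hp : y ⬝ᵥ y = 1 - c := by
      rw [hy, dot_sub_smul_left, dot_sub_smul_right, dot_sub_smul_right,
        hee, hdot_e_one, hone_e, hdot_one_one, hcn]
      ring
    have hs_val : y ⬝ᵥ (M *ᵥ y) = ∑ j, w u j := by
      have h1 : e ⬝ᵥ (lapW w *ᵥ e) = ∑ j, w u j := by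
        rw [he, single_dotProduct, one_mul, lapW_mulVec]
        simp [Pi.single_apply, mul_sub, Finset.sum_sub_distrib, mul_ite, mul_one, mul_zero,
          Finset.sum_ite_eq', hdiag]
      have h2 : one ⬝ᵥ (lapW w *ᵥ e) = 0 := by
        rw [dotProduct_mulVec, ← mulVec_transpose, lapW_transpose w hsymm, hLone,
          zero_dotProduct]
      rw [hMy, hy, dot_sub_smul_left, h1, h2]
      ring
    have hS : ∑ j, w u j ≤ (n - 1) * wmax := by
      have h1 : ∑ j ∈ Finset.univ.erase u, w u j = ∑ j, w u j :=
        Finset.sum_erase _ (hdiag u)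
      have h2 : ∑ j ∈ Finset.univ.erase u, w u j ≤ (Finset.univ.erase u).card • wmax :=
        Finset.sum_le_card_nsmul _ _ _ fun j _ => hub u j
      rw [h1, Finset.card_erase_of_mem (Finset.mem_univ u), Finset.card_univ,
        nsmul_eq_mul] at h2
      have hcast : ((Fintype.card V - 1 : ℕ) : ℝ) = n - 1 := by
        rw [Nat.cast_sub (by omega), Nat.cast_one, hn]
      rw [hcast] at h2
      exact h2
    rw [hexp, hQ', hp, hs_val] at hz
    have ht2 : t ^ 2 * (∑ j, w u j) ≤ t ^ 2 * ((n - 1) * wmax) :=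
      mul_le_mul_of_nonneg_left hS (sq_nonneg t)
    have heq2 : 2 * t * (1 - c) - t ^ 2 * ((n - 1) * wmax) = (n - 1) / (n ^ 2 * wmax) := by
      rw [ht, hc]
      field_simp
      ring
    have hfin : (n - 1) ^ 2 / (n ^ 3 * wmax) ≤ (n - 1) / (n ^ 2 * wmax) := by
      rw [div_le_div_iff₀ (by positivity) (by positivity)]
      have h1 : 0 ≤ (n - 1) * n ^ 2 * wmax :=
        mul_nonneg (mul_nonneg (by linarith) (by positivity)) hwpos.le
      nlinarith [h1]
    linarith
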